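/- In the setting of the previous statement, for fixed indices i ≠ n define C_{i,n} = ∑ⱼ λⱼ²·M_{i,j}M_{j,n} where M_{ℓ,m} = ξ_ℓᵀG⁻¹ξ_m and G = ∑ⱼλⱼξⱼξⱼᵀ. Then E[C_{i,n}] = 0. -/

import Mathlib

open MeasureTheory ProbabilityTheory Matrix Filter Topology

lemma aux_measurableSet_summable {α : Type*} [MeasurableSpace α]
    {f : ℕ → α → ℝ} (hf : ∀ n, Measurable (f n)) :
    MeasurableSet {x | Summable fun n => f n x} := by
  have hrw : {x | Summable fun n => f n x} =
      ⋂ (q : ℚ) (_ : 0 < q), ⋃ (N : Finset ℕ),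
        ⋂ (m : Finset ℕ) (_ : N ≤ m) (n : Finset ℕ) (_ : N ≤ n),
          {x | dist (∑ j ∈ m, f j x) (∑ j ∈ n, f j x) < (q : ℝ)} := by
    ext x
    simp only [Set.mem_setOf_eq, summable_iff_cauchySeq_finset, Metric.cauchySeq_iff,
      Set.mem_iInter, Set.mem_iUnion]
    constructor
    · intro h q hq
      obtain ⟨N, hN⟩ := h (q : ℝ) (by exact_mod_cast hq)
      exact ⟨N, fun m hm n hn => hN m hm n hn⟩
    · intro h ε hε
      obtain ⟨q, hq0, hqε⟩ := exists_rat_btwn hε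
      obtain ⟨N, hN⟩ := h q (by exact_mod_cast hq0)
      exact ⟨N, fun m hm n hn => (hN m hm n hn).trans hqε⟩
  rw [hrw]
  refine MeasurableSet.iInter fun q => MeasurableSet.iInter fun _ =>
    MeasurableSet.iUnion fun N => MeasurableSet.iInter fun m => MeasurableSet.iInter fun _ =>
    MeasurableSet.iInter fun n => MeasurableSet.iInter fun _ => ?_
  exact measurableSet_lt
    ((Finset.measurable_sum _ fun j _ => hf j).dist (Finset.measurable_sum _ fun j _ => hf j))
    measurable_const

lemma aux_measurable_tsum {α : Type*} [MeasurableSpace α]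
    {f : ℕ → α → ℝ} (hf : ∀ n, Measurable (f n)) :
    Measurable fun x => ∑' n, f n x := by
  have hS := aux_measurableSet_summable hf
  set S := {x | Summable fun n => f n x} with hSdef
  refine measurable_of_tendsto_metrizable
    (f := fun N => S.indicator fun x => ∑ n ∈ Finset.range N, f n x)
    (fun N => (Finset.measurable_sum _ fun j _ => hf j).indicator hS) ?_
  rw [tendsto_pi_nhds]
  intro x
  by_cases hx : x ∈ S
  · simp only [Set.indicator_of_mem hx]
    exact hx.hasSum.tendsto_sum_nat
  · simp only [Set.indicator_of_notMem hx, tsum_eq_zero_of_not_summable hx]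
    exact tendsto_const_nhds

lemma aux_measurable_det {α : Type*} [MeasurableSpace α] {k : ℕ}
    {A : α → Matrix (Fin k) (Fin k) ℝ} (hA : ∀ a b, Measurable fun x => A x a b) :
    Measurable fun x => (A x).det := by
  simp_rw [Matrix.det_apply']
  exact Finset.measurable_sum _ fun σ _ =>
    (measurable_const.mul (Finset.measurable_prod _ fun b _ => hA _ _))

/-- In the Gaussian setting of Statement 11, for fixed `i ≠ n`
the quantity `C_{i,n} = ∑ⱼ λⱼ² M_{i,j} M_{j,n}` has expectation zero. -/
theorem offdiag_C_mean_zero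
    {Ω : Type*} [MeasurableSpace Ω] (μ : Measure Ω) [IsProbabilityMeasure μ]
    {k : ℕ} (ξ : ℕ × Fin k → Ω → ℝ) (hmeas : ∀ p, Measurable (ξ p))
    (hiid : iIndepFun ξ μ)
    (hgauss : ∀ p, Measure.map (ξ p) μ = gaussianReal 0 1)
    (lam : ℕ → ℝ) (hpos : ∀ j, 0 < lam j) (hsum : Summable lam)
    (G : Ω → Matrix (Fin k) (Fin k) ℝ)
    (hG : ∀ ω, G ω = ∑' j : ℕ,
      lam j • Matrix.vecMulVec (fun i => ξ (j, i) ω) (fun i => ξ (j, i) ω))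
    (hGinv : ∀ᵐ ω ∂μ, IsUnit (G ω).det)
    (Mc : ℕ → ℕ → Ω → ℝ)
    (hMc : ∀ l m ω, Mc l m ω =
      (fun i' => ξ (l, i') ω) ⬝ᵥ ((G ω)⁻¹ *ᵥ fun i' => ξ (m, i') ω))
    (C : ℕ → ℕ → Ω → ℝ)
    (hC : ∀ i n ω, C i n ω = ∑' j : ℕ, lam j ^ 2 * Mc i j ω * Mc j n ω)
    (i n : ℕ) (hin : i ≠ n) (hint : Integrable (C i n) μ) :
    ∫ ω, C i n ω ∂μ = 0 := by
  classical
  -- deterministic functionals on the path space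
  set E := (ℕ × Fin k → ℝ) with hE
  set w : ℕ → E → (Fin k → ℝ) := fun j v a => v (j, a) with hw
  set g : E → Matrix (Fin k) (Fin k) ℝ :=
    (fun v => ∑' j : ℕ, lam j • Matrix.vecMulVec (w j v) (w j v)) with hg
  set mc : ℕ → ℕ → E → ℝ := (fun l m v => w l v ⬝ᵥ ((g v)⁻¹ *ᵥ w m v)) with hmc
  set F0 : E → ℝ := (fun v => ∑' j : ℕ, lam j ^ 2 * mc i j v * mc j n v) with hF0
  set recon : (Fin k → ℝ) × E → E := (fun z p => if p.1 = i then z.1 p.2 else z.2 p) with hrecon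
  set F : (Fin k → ℝ) × E → ℝ := (fun z => F0 (recon z)) with hF
  set X : Ω → Fin k → ℝ := (fun ω a => ξ (i, a) ω) with hX
  set Y : Ω → E := (fun ω p => if p.1 = i then 0 else ξ p ω) with hY
  set pair : Ω → (Fin k → ℝ) × E := (fun ω => (X ω, Y ω)) with hpair
  -- F reproduces C along the sample paths
  have hrecon_pair : ∀ ω, recon (pair ω) = fun p => ξ p ω := by
    intro ω; funext p
    show (if p.1 = i then X ω p.2 else Y ω p) = ξ p ω
    by_cases h : p.1 = i
    · have hp : ((i : ℕ), p.2) = p := by rw [← h]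
      simp only [if_pos h, hX]
      rw [hp]
    · simp only [if_neg h, hY, if_neg h]
  have hg_pair : ∀ ω, g (fun p => ξ p ω) = G ω := fun ω => (hG ω).symm
  have hFC : ∀ ω, F (pair ω) = C i n ω := by
    intro ω
    show F0 (recon (pair ω)) = C i n ω
    rw [hrecon_pair ω, hC]
    refine tsum_congr fun j => ?_
    have hmc' : ∀ l m, mc l m (fun p => ξ p ω) = Mc l m ω := by
      intro l m
      have h0 : mc l m (fun p => ξ p ω)
          = w l (fun p => ξ p ω) ⬝ᵥ ((g (fun p => ξ p ω))⁻¹ *ᵥ w m (fun p => ξ p ω)) := rfl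
      rw [h0, hg_pair ω, hMc]
    rw [hmc', hmc']
  -- the sign-flip is odd for F
  have hFodd : ∀ (x : Fin k → ℝ) (y : E), F (-x, y) = -F (x, y) := by
    intro x y
    set v : E := recon (x, y) with hv
    set v' : E := fun p => if p.1 = i then -(v p) else v p with hv'
    have hrv : recon (-x, y) = v' := by
      funext p
      show (if p.1 = i then (-x) p.2 else y p) = (if p.1 = i then -(v p) else v p)
      by_cases h : p.1 = i
      · simp only [if_pos h, hv, hrecon, Pi.neg_apply]
      · simp only [if_neg h, hv, hrecon]
    have hw' : ∀ l, w l v' = if l = i then -(w l v) else w l v := by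
      intro l
      by_cases h : l = i
      · rw [if_pos h]; funext a
        show (if (l, a).1 = i then -(v (l, a)) else v (l, a)) = -(v (l, a))
        rw [if_pos h]
      · rw [if_neg h]; funext a
        show (if (l, a).1 = i then -(v (l, a)) else v (l, a)) = v (l, a)
        rw [if_neg h]
    have hg' : g v' = g v := by
      show ∑' j, lam j • Matrix.vecMulVec (w j v') (w j v') = _
      refine tsum_congr fun j => ?_
      rw [hw' j]
      by_cases h : j = i
      · rw [if_pos h]
        congr 1
        ext a b
        simp [Matrix.vecMulVec_apply]
      · rw [if_neg h]
    have hmc2 : ∀ l m, mc l m v' =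
        (if l = i then -1 else 1) * ((if m = i then -1 else 1) * mc l m v) := by
      intro l m
      show w l v' ⬝ᵥ ((g v')⁻¹ *ᵥ w m v') = _
      rw [hg', hw' l, hw' m]
      by_cases hl : l = i <;> by_cases hm : m = i <;>
        simp [hl, hm, neg_dotProduct, dotProduct_neg, Matrix.mulVec_neg, hmc]
    show F0 (recon (-x, y)) = -F0 (recon (x, y))
    rw [hrv, ← hv, ← tsum_neg]
    refine tsum_congr fun j => ?_
    have hni : ¬ (n = i) := fun hh => hin hh.symm
    by_cases h : j = i <;> simp [hmc2, h, hni] <;> ring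
  -- measurability of the functionals
  have hterm_meas : ∀ (j : ℕ) (a b : Fin k),
      Measurable fun v : E => (lam j • Matrix.vecMulVec (w j v) (w j v)) a b := by
    intro j a b
    have h1 : (fun v : E => (lam j • Matrix.vecMulVec (w j v) (w j v)) a b)
        = fun v : E => lam j * (v (j, a) * v (j, b)) := by
      funext v
      simp [Matrix.smul_apply, Matrix.vecMulVec_apply, hw, smul_eq_mul]
    rw [h1]
    exact measurable_const.mul ((measurable_pi_apply _).mul (measurable_pi_apply _))
  set Sg : Set E :=
    {v | ∀ a b : Fin k, Summable fun j => (lam j • Matrix.vecMulVec (w j v) (w j v)) a b}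
    with hSg
  have hSgm : MeasurableSet Sg := by
    have h1 : Sg = ⋂ (a : Fin k) (b : Fin k),
        {v : E | Summable fun j => (lam j • Matrix.vecMulVec (w j v) (w j v)) a b} := by
      ext v; simp [hSg, Set.mem_iInter]
    rw [h1]
    exact MeasurableSet.iInter fun a => MeasurableSet.iInter fun b =>
      aux_measurableSet_summable fun j => hterm_meas j a b
  have hSg_iff : ∀ v : E, v ∈ Sg ↔ Summable fun j => lam j • Matrix.vecMulVec (w j v) (w j v) := by
    intro v
    constructor
    · exact fun h => Pi.summable.mpr fun a => Pi.summable.mpr fun b => h a b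
    · exact fun h a b => Pi.summable.mp (Pi.summable.mp h a) b
  have hg_meas : ∀ a b : Fin k, Measurable fun v : E => g v a b := by
    intro a b
    have hentry : (fun v : E => g v a b) = Sg.indicator
        (fun v => ∑' j, (lam j • Matrix.vecMulVec (w j v) (w j v)) a b) := by
      funext v
      by_cases hv : v ∈ Sg
      · rw [Set.indicator_of_mem hv]
        have hs : Summable fun j => lam j • Matrix.vecMulVec (w j v) (w j v) := (hSg_iff v).mp hv
        have hs2 : Summable fun j => (lam j • Matrix.vecMulVec (w j v) (w j v)) a :=
          Pi.summable.mp hs a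
        have e1 : g v a b = (∑' j, (lam j • Matrix.vecMulVec (w j v) (w j v)) a) b :=
          congrFun (tsum_apply hs) b
        rw [e1, tsum_apply hs2]
      · rw [Set.indicator_of_notMem hv]
        have hs : ¬ Summable fun j => lam j • Matrix.vecMulVec (w j v) (w j v) :=
          fun hh => hv ((hSg_iff v).mpr hh)
        have e0 : g v = 0 := tsum_eq_zero_of_not_summable hs
        rw [e0]
        rfl
    rw [hentry]
    exact (aux_measurable_tsum fun j => hterm_meas j a b).indicator hSgm
  have hdet_meas : Measurable fun v : E => (g v).det := aux_measurable_det hg_meas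
  have hadj_meas : ∀ a b : Fin k, Measurable fun v : E => (g v).adjugate a b := by
    intro a b
    have h1 : (fun v : E => (g v).adjugate a b)
        = fun v => ((g v).updateRow b (Pi.single a 1)).det := by
      funext v; rw [Matrix.adjugate_apply]
    rw [h1]
    refine aux_measurable_det fun a' b' => ?_
    have h2 : (fun v : E => ((g v).updateRow b (Pi.single a 1)) a' b')
        = fun v => if a' = b then (Pi.single a 1 : Fin k → ℝ) b' else g v a' b' := by
      funext v; rw [Matrix.updateRow_apply]
    rw [h2]
    by_cases h : a' = b
    · simp only [if_pos h]; exact measurable_const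
    · simp only [if_neg h]; exact hg_meas a' b'
  have hinv_meas : ∀ a b : Fin k, Measurable fun v : E => (g v)⁻¹ a b := by
    intro a b
    have h1 : (fun v : E => (g v)⁻¹ a b)
        = fun v => ((g v).det)⁻¹ * (g v).adjugate a b := by
      funext v
      rw [Matrix.inv_def, Matrix.smul_apply, smul_eq_mul, Ring.inverse_eq_inv']
    rw [h1]
    exact hdet_meas.inv.mul (hadj_meas a b)
  have hmc_meas : ∀ l m : ℕ, Measurable (mc l m) := by
    intro l m
    have h1 : mc l m = fun v => ∑ a, v (l, a) * ∑ b, (g v)⁻¹ a b * v (m, b) := by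
      funext v
      simp [hmc, dotProduct, Matrix.mulVec, hw]
    rw [h1]
    exact Finset.measurable_sum _ fun a _ => (measurable_pi_apply _).mul
      (Finset.measurable_sum _ fun b _ => (hinv_meas a b).mul (measurable_pi_apply _))
  have hF0_meas : Measurable F0 := by
    rw [hF0]
    exact aux_measurable_tsum fun j =>
      (measurable_const.mul (hmc_meas i j)).mul (hmc_meas j n)
  have hrecon_meas : Measurable recon := by
    rw [hrecon]
    refine measurable_pi_lambda _ fun p => ?_
    by_cases h : p.1 = i
    · simp only [if_pos h]; exact (measurable_pi_apply p.2).comp measurable_fst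
    · simp only [if_neg h]; exact (measurable_pi_apply p).comp measurable_snd
  have hF_meas : Measurable F := hF0_meas.comp hrecon_meas
  -- measurability of the random variables
  have hXmeas : Measurable X := measurable_pi_lambda _ fun a => hmeas (i, a)
  have hYmeas : Measurable Y := by
    rw [hY]
    refine measurable_pi_lambda _ fun p => ?_
    by_cases h : p.1 = i
    · simp only [if_pos h]; exact measurable_const
    · simp only [if_neg h]; exact hmeas p
  have hpair_meas : Measurable pair := hXmeas.prodMk hYmeas
  -- independence of X and Y
  have hXY : IndepFun X Y μ := by
    have hiid' : iIndep (fun p => MeasurableSpace.comap (ξ p) inferInstance) μ :=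
      (iIndepFun_iff_iIndep _ _ _).mp hiid
    have hle : ∀ p : ℕ × Fin k,
        MeasurableSpace.comap (ξ p) inferInstance ≤ (inferInstance : MeasurableSpace Ω) :=
      fun p => (hmeas p).comap_le
    have hdisj : Disjoint {q : ℕ × Fin k | q.1 = i} {q : ℕ × Fin k | q.1 ≠ i} := by
      simp [Set.disjoint_left]
    have hindep2 := indep_iSup_of_disjoint hle hiid' hdisj
    rw [IndepFun_iff_Indep]
    have hYle : MeasurableSpace.comap Y inferInstance
        ≤ ⨆ p ∈ {q : ℕ × Fin k | q.1 ≠ i}, MeasurableSpace.comap (ξ p) inferInstance := by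
      refine measurable_iff_comap_le.mp ?_
      letI : MeasurableSpace Ω :=
        ⨆ p ∈ {q : ℕ × Fin k | q.1 ≠ i}, MeasurableSpace.comap (ξ p) inferInstance
      refine measurable_pi_lambda _ fun p => ?_
      by_cases h : p.1 = i
      · have h0 : (fun ω => Y ω p) = fun _ => (0 : ℝ) := by funext ω; simp [hY, h]
        rw [h0]; exact measurable_const
      · have h0 : (fun ω => Y ω p) = ξ p := by funext ω; simp [hY, h]
        rw [h0]
        refine Measurable.mono (measurable_iff_comap_le.mpr le_rfl)
          (le_iSup₂ (f := fun (p : ℕ × Fin k) (_ : p ∈ {q : ℕ × Fin k | q.1 ≠ i}) =>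
            MeasurableSpace.comap (ξ p) inferInstance) p h) le_rfl
    have hXle : MeasurableSpace.comap X inferInstance
        ≤ ⨆ p ∈ {q : ℕ × Fin k | q.1 = i}, MeasurableSpace.comap (ξ p) inferInstance := by
      refine measurable_iff_comap_le.mp ?_
      letI : MeasurableSpace Ω :=
        ⨆ p ∈ {q : ℕ × Fin k | q.1 = i}, MeasurableSpace.comap (ξ p) inferInstance
      refine measurable_pi_lambda _ fun a => ?_
      refine Measurable.mono (measurable_iff_comap_le.mpr le_rfl)
        (le_iSup₂ (f := fun (p : ℕ × Fin k) (_ : p ∈ {q : ℕ × Fin k | q.1 = i}) =>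
          MeasurableSpace.comap (ξ p) inferInstance) (i, a) rfl) le_rfl
    exact indep_of_indep_of_le_left (indep_of_indep_of_le_right hindep2 hYle) hXle
  have hmap_pair : Measure.map pair μ = (Measure.map X μ).prod (Measure.map Y μ) :=
    (indepFun_iff_map_prod_eq_prod_map_map hXmeas.aemeasurable hYmeas.aemeasurable).mp hXY
  -- the law of X is a product of standard gaussians
  have hInt : ∀ s : Fin k → Set ℝ, (∀ a, MeasurableSet (s a)) →
      μ (⋂ a, ξ (i, a) ⁻¹' s a) = ∏ a, (gaussianReal 0 1) (s a) := by
    intro s hs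
    set Sf : Finset (ℕ × Fin k) := Finset.image (fun a : Fin k => (i, a)) Finset.univ with hSf
    have hinj : ∀ a ∈ Finset.univ, ∀ b ∈ Finset.univ,
        (fun a : Fin k => ((i : ℕ), a)) a = (fun a : Fin k => ((i : ℕ), a)) b → a = b := by
      intro a _ b _ h
      exact (Prod.mk.injEq _ _ _ _ ▸ h).2
    have hmul := hiid.measure_inter_preimage_eq_mul Sf
      (sets := fun p => if p.1 = i then s p.2 else Set.univ)
      (fun p _ => by by_cases h : p.1 = i <;> simp [h, hs])
    have h1 : (⋂ p ∈ Sf, ξ p ⁻¹' (if p.1 = i then s p.2 else Set.univ))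
        = ⋂ a, ξ (i, a) ⁻¹' s a := by
      ext ω
      simp only [Set.mem_iInter, hSf, Finset.mem_image, Finset.mem_univ, true_and]
      constructor
      · intro h a
        have := h (i, a) ⟨a, rfl⟩
        simpa using this
      · rintro h p ⟨a, rfl⟩
        simpa using h a
    have h2 : (∏ p ∈ Sf, μ (ξ p ⁻¹' (if p.1 = i then s p.2 else Set.univ)))
        = ∏ a, μ (ξ (i, a) ⁻¹' s a) := by
      rw [hSf, Finset.prod_image hinj]
      exact Finset.prod_congr rfl fun a _ => by simp
    rw [h1, h2] at hmul
    rw [hmul]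
    refine Finset.prod_congr rfl fun a _ => ?_
    rw [← Measure.map_apply (hmeas (i, a)) (hs a), hgauss (i, a)]
  have hmapX : Measure.map X μ = Measure.pi fun _ : Fin k => gaussianReal 0 1 := by
    refine (Measure.pi_eq fun s hs => ?_).symm
    rw [Measure.map_apply hXmeas (MeasurableSet.univ_pi hs)]
    have h1 : X ⁻¹' Set.univ.pi s = ⋂ a, ξ (i, a) ⁻¹' s a := by
      ext ω; simp [hX, Set.mem_pi]
    rw [h1, hInt s hs]
  have hneg_gauss : (gaussianReal 0 1).map (fun x : ℝ => -x) = gaussianReal 0 1 := by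
    have h := gaussianReal_map_const_mul (μ := 0) (v := 1) (-1 : ℝ)
    have h2 : (fun x : ℝ => (-1 : ℝ) * x) = fun x : ℝ => -x := by funext x; ring
    rw [h2] at h
    rw [h]
    norm_num
  have hmapX' : Measure.map (fun ω => -X ω) μ
      = Measure.pi fun _ : Fin k => gaussianReal 0 1 := by
    refine (Measure.pi_eq fun s hs => ?_).symm
    rw [Measure.map_apply (f := fun ω => -X ω) hXmeas.neg (MeasurableSet.univ_pi hs)]
    have h1 : (fun ω => -X ω) ⁻¹' Set.univ.pi s
        = ⋂ a, ξ (i, a) ⁻¹' ((fun r : ℝ => -r) ⁻¹' s a) := by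
      ext ω; simp [hX, Set.mem_pi]
    rw [h1, hInt _ fun a => (hs a).preimage measurable_neg]
    refine Finset.prod_congr rfl fun a _ => ?_
    conv_rhs => rw [← hneg_gauss]
    rw [Measure.map_apply (measurable_neg : Measurable fun x : ℝ => -x) (hs a)]
  -- transfer the integral and use the sign flip
  set ν : Measure E := Measure.map Y μ with hν
  haveI : IsProbabilityMeasure ν := Measure.isProbabilityMeasure_map hYmeas.aemeasurable
  set π : Measure (Fin k → ℝ) := Measure.pi fun _ : Fin k => gaussianReal 0 1 with hπ
  have hρ : Measure.map pair μ = π.prod ν := by rw [hmap_pair, hmapX]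
  haveI : IsProbabilityMeasure π := by
    rw [hπ]; infer_instance
  have hmpneg : MeasurePreserving (fun x : Fin k → ℝ => -x) π π := by
    refine ⟨measurable_neg, ?_⟩
    conv_lhs => rw [← hmapX]
    rw [Measure.map_map (measurable_neg : Measurable fun x : Fin k → ℝ => -x) hXmeas]
    exact hmapX'
  have hT : MeasurePreserving (Prod.map (fun x : Fin k → ℝ => -x) (id : E → E))
      (π.prod ν) (π.prod ν) := hmpneg.prod (MeasurePreserving.id ν)
  have hTemb : MeasurableEmbedding (Prod.map (fun x : Fin k → ℝ => -x) (id : E → E)) :=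
    (MeasurableEquiv.prodCongr (MeasurableEquiv.neg (Fin k → ℝ))
      (MeasurableEquiv.refl E)).measurableEmbedding
  have h1 : ∫ ω, C i n ω ∂μ = ∫ z, F z ∂(π.prod ν) := by
    rw [← hρ, integral_map hpair_meas.aemeasurable hF_meas.aestronglyMeasurable]
    exact integral_congr_ae (Filter.Eventually.of_forall fun ω => (hFC ω).symm)
  have h2 : ∫ z, F z ∂(π.prod ν) = ∫ z, F (Prod.map (fun x : Fin k → ℝ => -x) id z) ∂(π.prod ν) :=
    (hT.integral_comp hTemb F).symm
  have h3 : (fun z : (Fin k → ℝ) × E => F (Prod.map (fun x : Fin k → ℝ => -x) id z))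
      = fun z => -F z := by
    funext z
    exact hFodd z.1 z.2
  rw [h3] at h2
  rw [integral_neg] at h2
  have h4 : ∫ z, F z ∂(π.prod ν) = 0 := by linarith
  rw [h1, h4]
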